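/- Let D ≥ 1. For prefix weights μ_1, …, μ_D ∈ ℝ, an affine model f(x) = b + Σ_j w_j x_j, and vectors x^t, x^0 ∈ ℝ^D, define the value function v(S) = f(y) with y_j = x^t_j for j ∈ S and y_j = x^0_j otherwise, and the attribution s_i^μ = Σ_{k=i}^D μ_k·( v({1,…,k}) − v({1,…,k}∖{i}) ), where the coalitions range over the physically admissible prefix trajectories {1,…,k} containing i. Then the sum rule Σ_{i=1}^D s_i^μ = v({1,…,D}) − v(∅) holds for every choice of b ∈ ℝ, w ∈ ℝ^D, x^t and x^0 if and only if Σ_{k=i}^D μ_k = 1 for every i = 1,…,D, equivalently μ_D = 1 and μ_k = 0 for all k < D. In that case s_i^μ = w_i·(x^t_i − x^0_i), which coincides with the closed-form trajectory Shapley value f(x^t_{1:i}, x^0_{(i+1):D}) − f(x^t_{1:(i−1)}, x^0_{i:D}); i.e., the weighting is uniquely determined by the sum rule and yields the closed form. -/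

import Mathlib

/-- The hybrid vector `hyb D xt x0 i` agrees with the test input `xt` on the
(1-indexed) coordinates `1..i` and with the baseline `x0` on coordinates `i+1..D`. -/
def hyb (D : ℕ) (xt x0 : Fin D → ℝ) (i : ℕ) : Fin D → ℝ :=
  fun j => if (j : ℕ) < i then xt j else x0 j

/-- The physically admissible prefix trajectory `{1, …, k}`, as a subset of the
0-indexed coordinates `Fin D`. -/
def prefixSet (D k : ℕ) : Finset (Fin D) :=
  Finset.univ.filter (fun j => (j : ℕ) < k)

/-- The baseline-imputed value function: `v(S) = f(y)` where `y` agrees with `xt`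
on coordinates in `S` and with `x0` on the complement of `S`. -/
def vfun {D : ℕ} (f : (Fin D → ℝ) → ℝ) (xt x0 : Fin D → ℝ) (S : Finset (Fin D)) : ℝ :=
  f (fun j => if j ∈ S then xt j else x0 j)

/-- The prefix-weighted attribution
`s_i^μ = ∑_{k=i}^D μ_k·(v({1,…,k}) − v({1,…,k}∖{i}))`, where `i : Fin D`
denotes the item with 1-index `i + 1`, so the admissible prefixes containing it
are `{1,…,k}` for `k = i+1, …, D`. -/
def sMu {D : ℕ} (μ : ℕ → ℝ) (f : (Fin D → ℝ) → ℝ) (xt x0 : Fin D → ℝ)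
    (i : Fin D) : ℝ :=
  ∑ k ∈ Finset.Icc ((i : ℕ) + 1) D,
    μ k * (vfun f xt x0 (prefixSet D k) - vfun f xt x0 (prefixSet D k \ {i}))

lemma diff_term (D : ℕ) (b : ℝ) (w xt x0 : Fin D → ℝ) (i : Fin D) (k : ℕ) (hk : (i:ℕ) < k) :
    vfun (fun x => b + ∑ j, w j * x j) xt x0 (prefixSet D k)
      - vfun (fun x => b + ∑ j, w j * x j) xt x0 (prefixSet D k \ {i})
    = w i * (xt i - x0 i) := by
  simp only [vfun]
  rw [add_sub_add_left_eq_sub, ← Finset.sum_sub_distrib]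
  rw [Finset.sum_eq_single i]
  · simp [prefixSet, hk, mul_sub]
  · intro j _ hj
    have h : (j ∈ prefixSet D k \ ({i}:Finset (Fin D))) ↔ j ∈ prefixSet D k := by
      simp [hj]
    rw [if_congr h rfl rfl]; ring
  · simp

lemma sMu_eq (D : ℕ) (μ : ℕ → ℝ) (b : ℝ) (w xt x0 : Fin D → ℝ) (i : Fin D) :
    sMu μ (fun x => b + ∑ j, w j * x j) xt x0 i
      = (∑ k ∈ Finset.Icc ((i:ℕ)+1) D, μ k) * (w i * (xt i - x0 i)) := by
  rw [sMu, Finset.sum_mul]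
  refine Finset.sum_congr rfl fun k hk => ?_
  rw [diff_term D b w xt x0 i k (by simpa using (Finset.mem_Icc.mp hk).1)]

lemma rhs_eq (D : ℕ) (b : ℝ) (w xt x0 : Fin D → ℝ) :
    vfun (fun x => b + ∑ j, w j * x j) xt x0 Finset.univ
      - vfun (fun x => b + ∑ j, w j * x j) xt x0 ∅
    = ∑ j, w j * (xt j - x0 j) := by
  simp [vfun, mul_sub, Finset.sum_sub_distrib]

lemma hyb_diff (D : ℕ) (b : ℝ) (w xt x0 : Fin D → ℝ) (i : Fin D) :
    (fun x : Fin D → ℝ => b + ∑ j, w j * x j) (hyb D xt x0 ((i : ℕ) + 1))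
      - (fun x : Fin D → ℝ => b + ∑ j, w j * x j) (hyb D xt x0 (i : ℕ))
    = w i * (xt i - x0 i) := by
  simp only
  rw [add_sub_add_left_eq_sub, ← Finset.sum_sub_distrib]
  rw [Finset.sum_eq_single i]
  · simp [hyb, mul_sub]
  · intro j _ hj
    have h : ((j:ℕ) < (i:ℕ)+1) ↔ ((j:ℕ) < (i:ℕ)) := by
      have : (j:ℕ) ≠ (i:ℕ) := fun h' => hj (Fin.ext h')
      omega
    simp only [hyb, h]
    ring
  · simp

/-- **Uniqueness of the prefix weighting under the sum rule (affine models).**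
The sum rule `∑_i s_i^μ = v({1,…,D}) − v(∅)` holds for every affine model and all
`x^t, x^0` iff `∑_{k=i}^D μ_k = 1` for every `i = 1, …, D`, which holds iff
`μ_D = 1` and `μ_k = 0` for `1 ≤ k < D`.  In that case
`s_i^μ = w_i·(x^t_i − x^0_i)`, coinciding with the closed-form trajectory
Shapley value `f(x^t_{1:i}, x^0_{(i+1):D}) − f(x^t_{1:(i−1)}, x^0_{i:D})`. -/
theorem trajectory_shapley_unique_weights (D : ℕ) (hD : 1 ≤ D) (μ : ℕ → ℝ) :
    ((∀ (b : ℝ) (w xt x0 : Fin D → ℝ),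
        ∑ i : Fin D, sMu μ (fun x => b + ∑ j, w j * x j) xt x0 i
          = vfun (fun x => b + ∑ j, w j * x j) xt x0 Finset.univ
            - vfun (fun x => b + ∑ j, w j * x j) xt x0 ∅)
        ↔ (∀ i, 1 ≤ i → i ≤ D → ∑ k ∈ Finset.Icc i D, μ k = 1))
    ∧ ((∀ i, 1 ≤ i → i ≤ D → ∑ k ∈ Finset.Icc i D, μ k = 1)
        ↔ (μ D = 1 ∧ ∀ k, 1 ≤ k → k < D → μ k = 0))
    ∧ ((∀ i, 1 ≤ i → i ≤ D → ∑ k ∈ Finset.Icc i D, μ k = 1) →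
        ∀ (b : ℝ) (w xt x0 : Fin D → ℝ) (i : Fin D),
          sMu μ (fun x => b + ∑ j, w j * x j) xt x0 i = w i * (xt i - x0 i)
          ∧ sMu μ (fun x => b + ∑ j, w j * x j) xt x0 i
            = (fun x : Fin D → ℝ => b + ∑ j, w j * x j) (hyb D xt x0 ((i : ℕ) + 1))
              - (fun x : Fin D → ℝ => b + ∑ j, w j * x j) (hyb D xt x0 (i : ℕ))) := by
  refine ⟨?_, ?_, ?_⟩
  · constructor
    · intro H i h1 h2
      set i' : Fin D := ⟨i - 1, by omega⟩ with hi'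
      have hidx : (i' : ℕ) + 1 = i := by simp [hi']; omega
      have := H 0 (fun j => if j = i' then 1 else 0) (fun _ => 1) (fun _ => 0)
      rw [rhs_eq] at this
      simp only [sMu_eq] at this
      rw [Finset.sum_eq_single i'] at this
      · simpa [hidx] using this
      · intro j _ hj; simp [hj]
      · simp
    · intro H b w xt x0
      rw [rhs_eq]
      simp only [sMu_eq]
      refine Finset.sum_congr rfl fun i _ => ?_
      rw [H ((i:ℕ)+1) (by omega) (by omega), one_mul]
  · constructor
    · intro H
      constructor
      · have := H D hD le_rfl
        simpa using this
      · intro k h1 h2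
        have hs : Finset.Icc k D = insert k (Finset.Icc (k+1) D) := by
          ext x; simp [Finset.mem_Icc]; omega
        have h3 := H k h1 (le_of_lt h2)
        have h4 := H (k+1) (by omega) h2
        rw [hs, Finset.sum_insert (by simp)] at h3
        rw [h4] at h3
        linarith
    · rintro ⟨hμD, hμ⟩ i h1 h2
      have hs : Finset.Icc i D = insert D (Finset.Ico i D) := by
        ext x; simp [Finset.mem_Icc, Finset.mem_Ico]; omega
      rw [hs, Finset.sum_insert (by simp)]
      rw [Finset.sum_eq_zero fun k hk => by
        rw [Finset.mem_Ico] at hk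
        exact hμ k (by omega) hk.2]
      simp [hμD]
  · intro H b w xt x0 i
    have h1 : sMu μ (fun x => b + ∑ j, w j * x j) xt x0 i = w i * (xt i - x0 i) := by
      rw [sMu_eq, H ((i:ℕ)+1) (by omega) (by omega), one_mul]
    exact ⟨h1, by rw [h1, hyb_diff]⟩
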